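/- Let L : ℝ^d → ℝ be a differentiable β-smooth function bounded below, and let T ≥ 16 be the number of iterations. Run T iterations of layer-wise SAM with batch size b (at step t: set w_{t+1/2} = w_t + r∇L_{t+1}(w_t') using a conditionally unbiased mini-batch stochastic gradient oracle with per-point variance bounded by σ²/b and coordinates outside the selected layers zeroed, and update w_{t+1} = w_t − η∇L_{t+1}(w_{t+1/2})), with the diminishing choices η = 1/(β√T) and r = 1/(β·T^{1/4}). Then (1/T)·Σ_{t=0}^{T−1} 𝔼[‖∇L(w_t)‖²] ≤ (4β/√T)·(L(w_0) − 𝔼[L(w_T)]) + 8σ²/(b√T); in particular the right-hand side is O(1/√T). -/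

import Mathlib

open MeasureTheory
open scoped RealInnerProductSpace

set_option maxHeartbeats 1600000

/-- The orthogonal projection of `x ∈ ℝ^d` onto the coordinate subspace given by the
coordinates (layers) in `S`: the coordinates outside `S` are zeroed. -/
noncomputable def layerProj {d : ℕ} (S : Finset (Fin d)) (x : EuclideanSpace ℝ (Fin d)) :
    EuclideanSpace ℝ (Fin d)  :=
  (EuclideanSpace.equiv (Fin d) ℝ).symm fun i => if i ∈ S then x i else 0

section Helpers

lemma layerProj_apply {d : ℕ} (S : Finset (Fin d)) (x : EuclideanSpace ℝ (Fin d)) (i : Fin d) :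
    layerProj S x i = if i ∈ S then x i else 0 := rfl

lemma layerProj_norm_le {d : ℕ} (S : Finset (Fin d)) (x : EuclideanSpace ℝ (Fin d)) :
    ‖layerProj S x‖ ≤ ‖x‖ := by
  rw [EuclideanSpace.norm_eq, EuclideanSpace.norm_eq]
  apply Real.sqrt_le_sqrt
  apply Finset.sum_le_sum
  intro i _
  rw [layerProj_apply]
  split_ifs
  · exact le_refl _
  · simp only [norm_zero]
    simpa using sq_nonneg ‖x i‖

lemma layerProj_continuous {d : ℕ} (S : Finset (Fin d)) : Continuous (layerProj S) := by
  have h : Continuous fun x : EuclideanSpace ℝ (Fin d) =>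
      (fun i => if i ∈ S then x i else 0 : Fin d → ℝ) := by
    refine continuous_pi fun i => ?_
    by_cases hi : i ∈ S
    · simpa [hi] using (EuclideanSpace.proj (𝕜 := ℝ) i).continuous
    · simpa [hi] using (continuous_const : Continuous fun _ : EuclideanSpace ℝ (Fin d) => (0:ℝ))
  exact (EuclideanSpace.equiv (Fin d) ℝ).symm.continuous.comp h

lemma gradient_continuous {d : ℕ} {β : ℝ} (hβ : 0 ≤ β)
    {L : EuclideanSpace ℝ (Fin d) → ℝ}
    (hsmooth : ∀ u v, ‖gradient L u - gradient L v‖ ≤ β * ‖u - v‖) :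
    Continuous (gradient L) := by
  have : LipschitzWith β.toNNReal (gradient L) := by
    refine LipschitzWith.of_dist_le_mul fun u v => ?_
    rw [dist_eq_norm, dist_eq_norm, Real.coe_toNNReal β hβ]
    exact hsmooth u v
  exact this.continuous

lemma descent_lemma {d : ℕ} {β : ℝ} (hβ : 0 ≤ β) {L : EuclideanSpace ℝ (Fin d) → ℝ}
    (hL : Differentiable ℝ L)
    (hsmooth : ∀ u v, ‖gradient L u - gradient L v‖ ≤ β * ‖u - v‖)
    (x y : EuclideanSpace ℝ (Fin d)) :
    L y ≤ L x + ⟪gradient L x, y - x⟫ + β / 2 * ‖y - x‖ ^ 2 := by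
  set v := y - x with hv
  have hpathc : Continuous fun t : ℝ => x + t • v := by continuity
  have hψc : Continuous fun t : ℝ => ⟪gradient L (x + t • v), v⟫ :=
    Continuous.inner ((gradient_continuous hβ hsmooth).comp hpathc) continuous_const
  have hderiv : ∀ t ∈ Set.uIcc (0:ℝ) 1,
      HasDerivAt (fun s => L (x + s • v)) (⟪gradient L (x + t • v), v⟫) t := by
    intro t _
    have hpath : HasDerivAt (fun s : ℝ => x + s • v) v t := by
      simpa using ((hasDerivAt_id t).smul_const v).const_add x
    have hgrad := (hL (x + t • v)).hasGradientAt
    have := hgrad.hasFDerivAt.comp_hasDerivAt t hpath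
    simpa [InnerProductSpace.toDual_apply_apply, Function.comp_def] using this
  have hFTC : ∫ t in (0:ℝ)..1, ⟪gradient L (x + t • v), v⟫ = L y - L x := by
    rw [intervalIntegral.integral_eq_sub_of_hasDerivAt hderiv
      (hψc.intervalIntegrable 0 1)]
    simp [hv]
  have hmono : ∫ t in (0:ℝ)..1, ⟪gradient L (x + t • v), v⟫ ≤
      ∫ t in (0:ℝ)..1, (⟪gradient L x, v⟫ + β * t * ‖v‖ ^ 2) := by
    refine intervalIntegral.integral_mono_on (by norm_num)
      (hψc.intervalIntegrable 0 1)
      (Continuous.intervalIntegrable (by fun_prop : Continuous fun t : ℝ => ⟪gradient L x, v⟫ + β * t * ‖v‖ ^ 2) 0 1) ?_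
    intro t ht
    rcases ht with ⟨ht0, ht1⟩
    have h1 : ⟪gradient L (x + t • v), v⟫ - ⟪gradient L x, v⟫
        = ⟪gradient L (x + t • v) - gradient L x, v⟫ := by
      rw [inner_sub_left]
    have h2 : ⟪gradient L (x + t • v) - gradient L x, v⟫ ≤ β * t * ‖v‖ ^ 2 := by
      refine (real_inner_le_norm _ _).trans ?_
      have h3 : ‖gradient L (x + t • v) - gradient L x‖ ≤ β * (t * ‖v‖) := by
        have := hsmooth (x + t • v) x
        simpa [norm_smul, abs_of_nonneg ht0] using this
      calc ‖gradient L (x + t • v) - gradient L x‖ * ‖v‖ ≤ β * (t * ‖v‖) * ‖v‖ :=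
            mul_le_mul_of_nonneg_right h3 (norm_nonneg _)
        _ = β * t * ‖v‖ ^ 2 := by ring
    linarith
  have hlin : ∫ t in (0:ℝ)..1, β * t * ‖v‖ ^ 2 = β / 2 * ‖v‖ ^ 2 := by
    have he : (fun t : ℝ => β * t * ‖v‖ ^ 2) = fun t => (β * ‖v‖ ^ 2) * t := by
      ext t; ring
    rw [he, intervalIntegral.integral_const_mul, integral_id]
    ring
  have hval : ∫ t in (0:ℝ)..1, (⟪gradient L x, v⟫ + β * t * ‖v‖ ^ 2)
      = ⟪gradient L x, v⟫ + β / 2 * ‖v‖ ^ 2 := by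
    rw [intervalIntegral.integral_add (intervalIntegrable_const)
      (Continuous.intervalIntegrable (by fun_prop : Continuous fun t : ℝ => β * t * ‖v‖ ^ 2) 0 1), hlin]
    simp
  rw [hFTC, hval] at hmono
  linarith

section condexp
variable {Ω : Type*} {m m0 : MeasurableSpace Ω} {μ : @MeasureTheory.Measure Ω m0}

lemma my_condexp_comp_clm {E F : Type*} [NormedAddCommGroup E] [NormedSpace ℝ E]
    [CompleteSpace E] [NormedAddCommGroup F] [NormedSpace ℝ F] [CompleteSpace F]
    (hm : m ≤ m0) [SigmaFinite (μ.trim hm)] (e : E →L[ℝ] F) {Y : Ω → E}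
    (hY : Integrable Y μ) :
    μ[fun ω => e (Y ω)|m] =ᵐ[μ] fun ω => e ((μ[Y|m]) ω) := by
  refine (ae_eq_condExp_of_forall_setIntegral_eq hm (e.integrable_comp hY) ?_ ?_ ?_).symm
  · intro s hs hμs
    exact (e.integrable_comp integrable_condExp).integrableOn
  · intro s hs hμs
    rw [e.integral_comp_comm integrable_condExp.integrableOn,
      e.integral_comp_comm hY.integrableOn, setIntegral_condExp hm hY hs]
  · exact StronglyMeasurable.aestronglyMeasurable
      (e.continuous.comp_stronglyMeasurable stronglyMeasurable_condExp)

end condexp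

lemma euclid_abs_coord_le {d : ℕ} (x : EuclideanSpace ℝ (Fin d)) (i : Fin d) :
    |x i| ≤ ‖x‖ := by
  rw [EuclideanSpace.norm_eq, ← Real.sqrt_sq_eq_abs]
  apply Real.sqrt_le_sqrt
  have := Finset.single_le_sum (f := fun j => ‖x j‖ ^ 2) (fun j _ => sq_nonneg _)
    (Finset.mem_univ i)
  simpa [Real.norm_eq_abs, sq_abs] using this

lemma inner_integrable {d : ℕ} {Ω : Type*} [MeasurableSpace Ω] {μ : Measure Ω}
    {X Y : Ω → EuclideanSpace ℝ (Fin d)}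
    (hXm : AEStronglyMeasurable X μ) (hYm : AEStronglyMeasurable Y μ)
    (hX2 : Integrable (fun ω => ‖X ω‖ ^ 2) μ) (hY2 : Integrable (fun ω => ‖Y ω‖ ^ 2) μ) :
    Integrable (fun ω => ⟪X ω, Y ω⟫) μ := by
  refine Integrable.mono (hX2.add hY2) (hXm.inner hYm) ?_
  filter_upwards with ω
  have h1 : |⟪X ω, Y ω⟫| ≤ ‖X ω‖ * ‖Y ω‖ := abs_real_inner_le_norm _ _
  have h2 : ‖X ω‖ * ‖Y ω‖ ≤ ‖X ω‖ ^ 2 + ‖Y ω‖ ^ 2 := by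
    nlinarith [sq_nonneg (‖X ω‖ - ‖Y ω‖)]
  simp only [Pi.add_apply, Real.norm_eq_abs]
  rw [abs_of_nonneg (by positivity : (0:ℝ) ≤ ‖X ω‖ ^ 2 + ‖Y ω‖ ^ 2)]
  exact h1.trans h2

lemma coord_mul_integrable {d : ℕ} {Ω : Type*} [MeasurableSpace Ω] {μ : Measure Ω}
    {X Y : Ω → EuclideanSpace ℝ (Fin d)}
    (hXm : AEStronglyMeasurable X μ) (hYm : AEStronglyMeasurable Y μ)
    (hX2 : Integrable (fun ω => ‖X ω‖ ^ 2) μ) (hY2 : Integrable (fun ω => ‖Y ω‖ ^ 2) μ)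
    (i : Fin d) : Integrable (fun ω => X ω i * Y ω i) μ := by
  have hXi : AEStronglyMeasurable (fun ω => X ω i) μ :=
    (EuclideanSpace.proj (𝕜 := ℝ) i).continuous.comp_aestronglyMeasurable hXm
  have hYi : AEStronglyMeasurable (fun ω => Y ω i) μ :=
    (EuclideanSpace.proj (𝕜 := ℝ) i).continuous.comp_aestronglyMeasurable hYm
  refine Integrable.mono (hX2.add hY2) (hXi.mul hYi) ?_
  filter_upwards with ω
  have h1 : |X ω i * Y ω i| ≤ ‖X ω‖ * ‖Y ω‖ := by
    rw [abs_mul]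
    exact mul_le_mul (euclid_abs_coord_le _ _) (euclid_abs_coord_le _ _) (abs_nonneg _)
      (norm_nonneg _)
  have h2 : ‖X ω‖ * ‖Y ω‖ ≤ ‖X ω‖ ^ 2 + ‖Y ω‖ ^ 2 := by
    nlinarith [sq_nonneg (‖X ω‖ - ‖Y ω‖)]
  simp only [Pi.add_apply, Real.norm_eq_abs]
  rw [abs_of_nonneg (by positivity : (0:ℝ) ≤ ‖X ω‖ ^ 2 + ‖Y ω‖ ^ 2)]
  exact h1.trans h2

lemma integral_inner_condexp {d : ℕ} {Ω : Type*} {m m0 : MeasurableSpace Ω}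
    {μ : @MeasureTheory.Measure Ω m0} [IsFiniteMeasure μ] (hm : m ≤ m0)
    {X Y Z : Ω → EuclideanSpace ℝ (Fin d)}
    (hXm : StronglyMeasurable[m] X)
    (hY : Integrable Y μ) (hZeq : μ[Y|m] =ᵐ[μ] Z)
    (hX2 : Integrable (fun ω => ‖X ω‖ ^ 2) μ) (hY2 : Integrable (fun ω => ‖Y ω‖ ^ 2) μ)
    (hZ2 : Integrable (fun ω => ‖Z ω‖ ^ 2) μ) :
    ∫ ω, ⟪X ω, Y ω⟫ ∂μ = ∫ ω, ⟪X ω, Z ω⟫ ∂μ := by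
  have hXm0 : AEStronglyMeasurable X μ := (hXm.mono hm).aestronglyMeasurable
  have hZm0 : AEStronglyMeasurable Z μ :=
    ((stronglyMeasurable_condExp.mono hm).aestronglyMeasurable).congr hZeq
  have hinner : ∀ (U V : Ω → EuclideanSpace ℝ (Fin d)) (ω : Ω),
      ⟪U ω, V ω⟫ = ∑ i, U ω i * V ω i := by
    intro U V ω
    simp [PiLp.inner_apply, RCLike.inner_apply, conj_trivial, mul_comm]
  simp_rw [hinner]
  rw [integral_finset_sum _ (fun i _ => coord_mul_integrable hXm0 hY.aestronglyMeasurable hX2 hY2 i),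
    integral_finset_sum _ (fun i _ => coord_mul_integrable hXm0 hZm0 hX2 hZ2 i)]
  refine Finset.sum_congr rfl fun i _ => ?_
  have hXi : StronglyMeasurable[m] (fun ω => X ω i) :=
    (EuclideanSpace.proj (𝕜 := ℝ) i).continuous.comp_stronglyMeasurable hXm
  have hYi : Integrable (fun ω => Y ω i) μ :=
    (EuclideanSpace.proj (𝕜 := ℝ) i).integrable_comp hY
  have hprod : Integrable (fun ω => X ω i * Y ω i) μ :=
    coord_mul_integrable hXm0 hY.aestronglyMeasurable hX2 hY2 i
  have key : μ[fun ω => X ω i * Y ω i|m] =ᵐ[μ] fun ω => X ω i * (μ[fun ω => Y ω i|m]) ω :=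
    condExp_mul_of_stronglyMeasurable_left hXi hprod hYi
  have hYic : μ[fun ω => Y ω i|m] =ᵐ[μ] fun ω => Z ω i := by
    refine (my_condexp_comp_clm hm (EuclideanSpace.proj (𝕜 := ℝ) i) hY).trans ?_
    filter_upwards [hZeq] with ω hω
    simp [hω]
  calc ∫ ω, X ω i * Y ω i ∂μ = ∫ ω, (μ[fun ω => X ω i * Y ω i|m]) ω ∂μ :=
        (integral_condExp hm (f := fun ω => X ω i * Y ω i)).symm
    _ = ∫ ω, X ω i * Z ω i ∂μ := by
        refine integral_congr_ae (key.trans ?_)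
        filter_upwards [hYic] with ω hω
        rw [hω]

lemma secondMoment_le {d : ℕ} {Ω : Type*} {m m0 : MeasurableSpace Ω}
    {μ : @MeasureTheory.Measure Ω m0} [IsProbabilityMeasure μ] (hm : m ≤ m0)
    {Y Z : Ω → EuclideanSpace ℝ (Fin d)} {c : ℝ}
    (hYm : AEStronglyMeasurable Y μ) (hZm0 : AEStronglyMeasurable Z μ)
    (hZm : StronglyMeasurable[m] Z)
    (hYint : Integrable Y μ) (hmean : μ[Y|m] =ᵐ[μ] Z)
    (hY2 : Integrable (fun ω => ‖Y ω‖ ^ 2) μ) (hZ2 : Integrable (fun ω => ‖Z ω‖ ^ 2) μ)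
    (hvar : ∀ᵐ ω ∂μ, (μ[(fun ω => ‖Y ω - Z ω‖ ^ 2)|m]) ω ≤ c) :
    ∫ ω, ‖Y ω‖ ^ 2 ∂μ ≤ c + ∫ ω, ‖Z ω‖ ^ 2 ∂μ := by
  have hYZ2 : Integrable (fun ω => ‖Y ω - Z ω‖ ^ 2) μ := by
    refine Integrable.mono ((hY2.add hZ2).const_mul 2)
      (((hYm.sub hZm0).norm).pow 2) ?_
    filter_upwards with ω
    have h1 : ‖Y ω - Z ω‖ ≤ ‖Y ω‖ + ‖Z ω‖ := norm_sub_le _ _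
    have h2 : ‖Y ω - Z ω‖ ^ 2 ≤ 2 * (‖Y ω‖ ^ 2 + ‖Z ω‖ ^ 2) := by
      nlinarith [norm_nonneg (Y ω - Z ω), norm_nonneg (Y ω), norm_nonneg (Z ω),
        sq_nonneg (‖Y ω‖ - ‖Z ω‖)]
    simp only [Pi.add_apply, Real.norm_eq_abs]
    rw [abs_of_nonneg (by positivity : (0:ℝ) ≤ ‖Y ω - Z ω‖ ^ 2),
      abs_of_nonneg (by positivity : (0:ℝ) ≤ 2 * (‖Y ω‖ ^ 2 + ‖Z ω‖ ^ 2))]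
    exact h2
  have hvar_int : ∫ ω, ‖Y ω - Z ω‖ ^ 2 ∂μ ≤ c := by
    have h1 := integral_condExp hm (f := fun ω => ‖Y ω - Z ω‖ ^ 2) (μ := μ)
    rw [← h1]
    calc ∫ ω, (μ[(fun ω => ‖Y ω - Z ω‖ ^ 2)|m]) ω ∂μ ≤ ∫ _, c ∂μ :=
          integral_mono_ae integrable_condExp (integrable_const c) hvar
      _ = c := by simp
  have hswap : ∫ ω, ⟪Z ω, Y ω⟫ ∂μ = ∫ ω, ⟪Z ω, Z ω⟫ ∂μ :=
    integral_inner_condexp hm hZm hYint hmean hZ2 hY2 hZ2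
  have hZYint : Integrable (fun ω => ⟪Z ω, Y ω⟫) μ := inner_integrable hZm0 hYm hZ2 hY2
  have hZZint : Integrable (fun ω => ⟪Z ω, Z ω⟫) μ := inner_integrable hZm0 hZm0 hZ2 hZ2
  have hexp : (fun ω => ‖Y ω‖ ^ 2)
      = fun ω => ‖Y ω - Z ω‖ ^ 2 + 2 * ⟪Z ω, Y ω⟫ - ⟪Z ω, Z ω⟫ := by
    funext ω
    have h := norm_sub_sq_real (Y ω) (Z ω)
    have h2 : ⟪Z ω, Z ω⟫ = ‖Z ω‖ ^ 2 := real_inner_self_eq_norm_sq _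
    have h3 : ⟪Y ω, Z ω⟫ = ⟪Z ω, Y ω⟫ := real_inner_comm _ _
    linarith
  have hZsq : ∫ ω, ⟪Z ω, Z ω⟫ ∂μ = ∫ ω, ‖Z ω‖ ^ 2 ∂μ := by
    refine integral_congr_ae ?_
    filter_upwards with ω
    exact real_inner_self_eq_norm_sq _
  have hI2 : Integrable (fun ω => 2 * ⟪Z ω, Y ω⟫) μ := hZYint.const_mul 2
  have hI1 : Integrable (fun ω => ‖Y ω - Z ω‖ ^ 2 + 2 * ⟪Z ω, Y ω⟫) μ := hYZ2.add hI2
  rw [hexp, integral_sub hI1 hZZint, integral_add hYZ2 hI2, integral_const_mul, hswap, hZsq]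
  linarith [hvar_int]

end Helpers

/-- Remark 1 (finite-horizon result): running `T ≥ 16` iterations of layer-wise SAM with
the diminishing choices `η = 1/(β√T)` and `r = 1/(β T^{1/4})`, we get
`(1/T) Σ_{t<T} 𝔼‖∇L(w_t)‖² ≤ (4β/√T)(L(w_0) − 𝔼[L(w_T)]) + 8σ²/(b√T)`,
so the right-hand side is `O(1/√T)`. -/
theorem layerwise_sam_convergence_finite_horizon
    {d : ℕ} {Ω : Type*} [MeasurableSpace Ω] (μ : Measure Ω) [IsProbabilityMeasure μ]
    (β r η σ : ℝ) (b : ℕ) (hb : 0 < b) (hβ : 0 < β)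
    (L : EuclideanSpace ℝ (Fin d) → ℝ) (hL : Differentiable ℝ L)
    (hsmooth : ∀ u v : EuclideanSpace ℝ (Fin d),
      ‖gradient L u - gradient L v‖ ≤ β * ‖u - v‖)
    (hbdd : ∃ C : ℝ, ∀ x, C ≤ L x)
    (T : ℕ) (hT : 16 ≤ T)
    (hη : η = 1 / (β * Real.sqrt T))
    (hr : r = 1 / (β * (T : ℝ) ^ ((1 : ℝ) / 4)))
    (w0 : EuclideanSpace ℝ (Fin d))
    (w Gasc Gmid : ℕ → Ω → EuclideanSpace ℝ (Fin d))
    (hw_meas : ∀ t, Measurable (w t))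
    (hGasc_meas : ∀ t, Measurable (Gasc t)) (hGmid_meas : ∀ t, Measurable (Gmid t))
    (hw0 : ∀ ω, w 0 ω = w0)
    (hupdate : ∀ t < T, ∀ ω, w (t + 1) ω = w t ω - η • Gmid t ω)
    -- the ascent gradient has the coordinates outside the selected layers zeroed
    (S : ℕ → Finset (Fin d))
    (hGasc_supp : ∀ t < T, ∀ ω, ∀ i ∉ S t, Gasc t ω i = 0)
    -- the oracle is conditionally unbiased with variance `≤ σ²/b` at the ascent point `w t`
    (hasc_mean : ∀ t < T,
      μ[Gasc t | MeasurableSpace.comap (w t) inferInstance] =ᵐ[μ]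
        fun ω => layerProj (S t) (gradient L (w t ω)))
    (hasc_var : ∀ t < T, ∀ᵐ ω ∂μ,
      (μ[(fun ω => ‖Gasc t ω - layerProj (S t) (gradient L (w t ω))‖ ^ 2) |
          MeasurableSpace.comap (w t) inferInstance]) ω ≤ σ ^ 2 / b)
    -- the oracle is conditionally unbiased with variance `≤ σ²/b` at the perturbed point
    (hmid_mean : ∀ t < T,
      μ[Gmid t | MeasurableSpace.comap (fun ω => (w t ω, Gasc t ω)) inferInstance] =ᵐ[μ]
        fun ω => gradient L (w t ω + r • Gasc t ω))
    (hmid_var : ∀ t < T, ∀ᵐ ω ∂μ,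
      (μ[(fun ω => ‖Gmid t ω - gradient L (w t ω + r • Gasc t ω)‖ ^ 2) |
          MeasurableSpace.comap (fun ω => (w t ω, Gasc t ω)) inferInstance]) ω ≤ σ ^ 2 / b)
    -- integrability of the quantities appearing in the argument
    (hL_int : ∀ t ≤ T, Integrable (fun ω => L (w t ω)) μ)
    (hgrad_sq_int : ∀ t ≤ T, Integrable (fun ω => ‖gradient L (w t ω)‖ ^ 2) μ)
    (hasc_int : ∀ t < T, Integrable (Gasc t) μ)
    (hasc_sq_int : ∀ t < T, Integrable (fun ω => ‖Gasc t ω‖ ^ 2) μ)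
    (hmid_int : ∀ t < T, Integrable (Gmid t) μ)
    (hmid_sq_int : ∀ t < T, Integrable (fun ω => ‖Gmid t ω‖ ^ 2) μ)
    (hgradmid_sq_int : ∀ t < T,
      Integrable (fun ω => ‖gradient L (w t ω + r • Gasc t ω)‖ ^ 2) μ) :
    (1 / (T : ℝ)) * ∑ t ∈ Finset.range T, ∫ ω, ‖gradient L (w t ω)‖ ^ 2 ∂μ ≤
      (4 * β / Real.sqrt T) * (L w0 - ∫ ω, L (w T ω) ∂μ) +
        8 * σ ^ 2 / (b * Real.sqrt T) := by
  classical
  -- numerics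
  have hTr : (16:ℝ) ≤ (T:ℝ) := by exact_mod_cast hT
  have hTpos : (0:ℝ) < (T:ℝ) := by linarith
  set sT := Real.sqrt (T:ℝ) with hsT_def
  have hsT4 : (4:ℝ) ≤ sT := by
    have h16 : Real.sqrt 16 = 4 := by
      rw [show (16:ℝ) = 4 ^ 2 by norm_num, Real.sqrt_sq (by norm_num : (0:ℝ) ≤ 4)]
    rw [hsT_def, ← h16]
    exact Real.sqrt_le_sqrt hTr
  have hsTpos : (0:ℝ) < sT := by linarith
  have hsTsq : sT * sT = (T:ℝ) := Real.mul_self_sqrt hTpos.le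
  have hβne : β ≠ 0 := ne_of_gt hβ
  have hsTne : sT ≠ 0 := ne_of_gt hsTpos
  have hηpos : 0 < η := by rw [hη]; positivity
  have hηne : η ≠ 0 := ne_of_gt hηpos
  have hqpos : 0 < (T:ℝ) ^ ((1:ℝ)/4) := Real.rpow_pos_of_pos hTpos _
  have hrpos : 0 < r := by rw [hr]; positivity
  have hβη : β * η = 1 / sT := by rw [hη]; field_simp
  have hq : ((T:ℝ) ^ ((1:ℝ)/4)) ^ 2 = sT := by
    have h1 : ((T:ℝ) ^ ((1:ℝ)/4)) ^ 2 = (T:ℝ) ^ (((1:ℝ)/4) * 2) := by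
      rw [← Real.rpow_natCast ((T:ℝ) ^ ((1:ℝ)/4)) 2, ← Real.rpow_mul hTpos.le]
      norm_num
    rw [h1, show ((1:ℝ)/4) * 2 = (1:ℝ)/2 by norm_num, hsT_def, Real.sqrt_eq_rpow]
  have hβ2r2 : β ^ 2 * r ^ 2 = 1 / sT := by
    rw [hr, div_pow, one_pow, mul_pow, ← hq]
    field_simp
  set ε := 1 / sT with hε_def
  set ν := σ ^ 2 / (b:ℝ) with hν_def
  have hεpos : 0 < ε := by rw [hε_def]; positivity
  have hε4 : ε ≤ 1/4 := by
    rw [hε_def]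
    exact one_div_le_one_div_of_le (by norm_num) hsT4
  have hbpos : (0:ℝ) < (b:ℝ) := by exact_mod_cast hb
  have hνnn : 0 ≤ ν := by rw [hν_def]; positivity
  have hgc : Continuous (gradient L) := gradient_continuous hβ.le hsmooth
  -- the key one-step estimate
  have key : ∀ t, t < T →
      η / 4 * (∫ ω, ‖gradient L (w t ω)‖ ^ 2 ∂μ) ≤
        (∫ ω, L (w t ω) ∂μ) - (∫ ω, L (w (t+1) ω) ∂μ) + η * ε * ν := by
    intro t ht
    have htT : t ≤ T := ht.le
    have ht1T : t + 1 ≤ T := ht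
    -- measurability
    have hXmeas : Measurable (fun ω => gradient L (w t ω)) :=
      hgc.measurable.comp (hw_meas t)
    have hWmid_meas : Measurable (fun ω => w t ω + r • Gasc t ω) :=
      (hw_meas t).add ((hGasc_meas t).const_smul r)
    have hZmeas : Measurable (fun ω => gradient L (w t ω + r • Gasc t ω)) :=
      hgc.measurable.comp hWmid_meas
    have hZ'meas : Measurable (fun ω => layerProj (S t) (gradient L (w t ω))) :=
      (layerProj_continuous (S t)).measurable.comp hXmeas
    -- sigma-algebras
    have hmW : MeasurableSpace.comap (w t) inferInstance ≤ _ := (hw_meas t).comap_le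
    have hmP : MeasurableSpace.comap (fun ω => (w t ω, Gasc t ω)) inferInstance ≤ _ :=
      ((hw_meas t).prodMk (hGasc_meas t)).comap_le
    have hpair : Measurable[MeasurableSpace.comap (fun ω => (w t ω, Gasc t ω)) inferInstance]
        (fun ω => (w t ω, Gasc t ω)) := Measurable.of_comap_le le_rfl
    have hwm : Measurable[MeasurableSpace.comap (w t) inferInstance] (w t) :=
      Measurable.of_comap_le le_rfl
    have hXmP : StronglyMeasurable[MeasurableSpace.comap (fun ω => (w t ω, Gasc t ω))
        inferInstance] (fun ω => gradient L (w t ω)) :=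
      ((hgc.measurable.comp measurable_fst).comp hpair).stronglyMeasurable
    have hZmP : StronglyMeasurable[MeasurableSpace.comap (fun ω => (w t ω, Gasc t ω))
        inferInstance] (fun ω => gradient L (w t ω + r • Gasc t ω)) := by
      have hφ : Measurable fun p : EuclideanSpace ℝ (Fin d) × EuclideanSpace ℝ (Fin d) =>
          gradient L (p.1 + r • p.2) :=
        hgc.measurable.comp (measurable_fst.add (measurable_snd.const_smul r))
      exact (hφ.comp hpair).stronglyMeasurable
    have hZ'mW : StronglyMeasurable[MeasurableSpace.comap (w t) inferInstance]
        (fun ω => layerProj (S t) (gradient L (w t ω))) :=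
      (((layerProj_continuous (S t)).comp hgc).measurable.comp hwm).stronglyMeasurable
    -- integrability
    have hX2 := hgrad_sq_int t htT
    have hY2 := hmid_sq_int t ht
    have hZ2 := hgradmid_sq_int t ht
    have hG2 := hasc_sq_int t ht
    have hZ'2 : Integrable (fun ω => ‖layerProj (S t) (gradient L (w t ω))‖ ^ 2) μ := by
      refine Integrable.mono hX2 ((hZ'meas.norm.pow_const 2).aestronglyMeasurable) ?_
      filter_upwards with ω
      simp only [Real.norm_eq_abs]
      rw [abs_of_nonneg (by positivity : (0:ℝ) ≤ ‖layerProj (S t) (gradient L (w t ω))‖ ^ 2),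
        abs_of_nonneg (by positivity : (0:ℝ) ≤ ‖gradient L (w t ω)‖ ^ 2)]
      exact pow_le_pow_left₀ (norm_nonneg _) (layerProj_norm_le _ _) 2
    -- second-moment bounds via conditional variance
    have hgmid2 : ∫ ω, ‖Gmid t ω‖ ^ 2 ∂μ ≤
        ν + ∫ ω, ‖gradient L (w t ω + r • Gasc t ω)‖ ^ 2 ∂μ :=
      secondMoment_le hmP (hGmid_meas t).aestronglyMeasurable hZmeas.aestronglyMeasurable
        hZmP (hmid_int t ht) (hmid_mean t ht) hY2 hZ2 (hmid_var t ht)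
    have hasc2 : ∫ ω, ‖Gasc t ω‖ ^ 2 ∂μ ≤
        ν + ∫ ω, ‖layerProj (S t) (gradient L (w t ω))‖ ^ 2 ∂μ :=
      secondMoment_le hmW (hGasc_meas t).aestronglyMeasurable hZ'meas.aestronglyMeasurable
        hZ'mW (hasc_int t ht) (hasc_mean t ht) hG2 hZ'2 (hasc_var t ht)
    have hZ'le : ∫ ω, ‖layerProj (S t) (gradient L (w t ω))‖ ^ 2 ∂μ ≤
        ∫ ω, ‖gradient L (w t ω)‖ ^ 2 ∂μ := by
      refine integral_mono hZ'2 hX2 fun ω => ?_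
      exact pow_le_pow_left₀ (norm_nonneg _) (layerProj_norm_le _ _) 2
    -- replace the stochastic gradient by its conditional mean in the inner product
    have hIJ : ∫ ω, ⟪gradient L (w t ω), Gmid t ω⟫ ∂μ =
        ∫ ω, ⟪gradient L (w t ω), gradient L (w t ω + r • Gasc t ω)⟫ ∂μ :=
      integral_inner_condexp hmP hXmP (hmid_int t ht) (hmid_mean t ht) hX2 hY2 hZ2
    -- lower bound for the inner product of the two gradients
    have hJlb : (1/2) * (∫ ω, ‖gradient L (w t ω)‖ ^ 2 ∂μ)
          + (1/2) * (∫ ω, ‖gradient L (w t ω + r • Gasc t ω)‖ ^ 2 ∂μ)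
          - (ε/2) * (∫ ω, ‖Gasc t ω‖ ^ 2 ∂μ)
        ≤ ∫ ω, ⟪gradient L (w t ω), gradient L (w t ω + r • Gasc t ω)⟫ ∂μ := by
      have hptw : ∀ ω, (1/2) * ‖gradient L (w t ω)‖ ^ 2
          + (1/2) * ‖gradient L (w t ω + r • Gasc t ω)‖ ^ 2
          - (ε/2) * ‖Gasc t ω‖ ^ 2
          ≤ ⟪gradient L (w t ω), gradient L (w t ω + r • Gasc t ω)⟫ := by
        intro ω
        have hns := norm_sub_sq_real (gradient L (w t ω))
          (gradient L (w t ω + r • Gasc t ω))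
        have hlip : ‖gradient L (w t ω) - gradient L (w t ω + r • Gasc t ω)‖ ≤
            β * (r * ‖Gasc t ω‖) := by
          have h := hsmooth (w t ω) (w t ω + r • Gasc t ω)
          have he : w t ω - (w t ω + r • Gasc t ω) = -(r • Gasc t ω) := by abel
          rw [he] at h
          simpa [norm_smul, abs_of_pos hrpos] using h
        have hsq : ‖gradient L (w t ω) - gradient L (w t ω + r • Gasc t ω)‖ ^ 2 ≤
            ε * ‖Gasc t ω‖ ^ 2 := by
          have h1 : ‖gradient L (w t ω) - gradient L (w t ω + r • Gasc t ω)‖ ^ 2 ≤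
              (β * (r * ‖Gasc t ω‖)) ^ 2 :=
            pow_le_pow_left₀ (norm_nonneg _) hlip 2
          calc ‖gradient L (w t ω) - gradient L (w t ω + r • Gasc t ω)‖ ^ 2
              ≤ (β * (r * ‖Gasc t ω‖)) ^ 2 := h1
            _ = (β ^ 2 * r ^ 2) * ‖Gasc t ω‖ ^ 2 := by ring
            _ = ε * ‖Gasc t ω‖ ^ 2 := by rw [hβ2r2]
        linarith
      have hia : Integrable (fun ω => (1/2 : ℝ) * ‖gradient L (w t ω)‖ ^ 2) μ :=
        hX2.const_mul _
      have hib : Integrable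
          (fun ω => (1/2 : ℝ) * ‖gradient L (w t ω + r • Gasc t ω)‖ ^ 2) μ :=
        hZ2.const_mul _
      have hi1 : Integrable (fun ω => (1/2 : ℝ) * ‖gradient L (w t ω)‖ ^ 2
          + (1/2) * ‖gradient L (w t ω + r • Gasc t ω)‖ ^ 2) μ := hia.add hib
      have hi2 : Integrable (fun ω => (ε/2) * ‖Gasc t ω‖ ^ 2) μ := hG2.const_mul _
      have hintL : Integrable (fun ω => (1/2) * ‖gradient L (w t ω)‖ ^ 2
          + (1/2) * ‖gradient L (w t ω + r • Gasc t ω)‖ ^ 2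
          - (ε/2) * ‖Gasc t ω‖ ^ 2) μ := hi1.sub hi2
      have hintR : Integrable
          (fun ω => ⟪gradient L (w t ω), gradient L (w t ω + r • Gasc t ω)⟫) μ :=
        inner_integrable hXmeas.aestronglyMeasurable hZmeas.aestronglyMeasurable hX2 hZ2
      have := integral_mono hintL hintR hptw
      calc (1/2) * (∫ ω, ‖gradient L (w t ω)‖ ^ 2 ∂μ)
            + (1/2) * (∫ ω, ‖gradient L (w t ω + r • Gasc t ω)‖ ^ 2 ∂μ)
            - (ε/2) * (∫ ω, ‖Gasc t ω‖ ^ 2 ∂μ)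
          = ∫ ω, ((1/2) * ‖gradient L (w t ω)‖ ^ 2
            + (1/2) * ‖gradient L (w t ω + r • Gasc t ω)‖ ^ 2
            - (ε/2) * ‖Gasc t ω‖ ^ 2) ∂μ := by
            rw [integral_sub hi1 hi2, integral_add hia hib,
              integral_const_mul, integral_const_mul, integral_const_mul]
        _ ≤ _ := this
    -- the descent step, integrated
    have hinner_int : Integrable (fun ω => ⟪gradient L (w t ω), Gmid t ω⟫) μ :=
      inner_integrable hXmeas.aestronglyMeasurable (hGmid_meas t).aestronglyMeasurable hX2 hY2
    have hptdesc : ∀ ω, L (w (t+1) ω) ≤ L (w t ω)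
        - η * ⟪gradient L (w t ω), Gmid t ω⟫ + (β * η ^ 2 / 2) * ‖Gmid t ω‖ ^ 2 := by
      intro ω
      have h := descent_lemma hβ.le hL hsmooth (w t ω) (w (t+1) ω)
      have hyx : w (t+1) ω - w t ω = -(η • Gmid t ω) := by
        rw [hupdate t ht ω]; abel
      rw [hyx] at h
      have h1 : ⟪gradient L (w t ω), -(η • Gmid t ω)⟫ =
          -(η * ⟪gradient L (w t ω), Gmid t ω⟫) := by
        rw [inner_neg_right, real_inner_smul_right]
      have h2 : ‖-(η • Gmid t ω)‖ ^ 2 = η ^ 2 * ‖Gmid t ω‖ ^ 2 := by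
        rw [norm_neg, norm_smul, Real.norm_eq_abs, abs_of_pos hηpos, mul_pow]
      rw [h1, h2] at h
      linarith [h]
    have hj1 : Integrable (fun ω => L (w t ω)
        - η * ⟪gradient L (w t ω), Gmid t ω⟫) μ :=
      (hL_int t htT).sub (hinner_int.const_mul η)
    have hj2 : Integrable (fun ω => (β * η ^ 2 / 2) * ‖Gmid t ω‖ ^ 2) μ := hY2.const_mul _
    have hRHSint : Integrable (fun ω => L (w t ω)
        - η * ⟪gradient L (w t ω), Gmid t ω⟫ + (β * η ^ 2 / 2) * ‖Gmid t ω‖ ^ 2) μ :=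
      hj1.add hj2
    have hA : ∫ ω, L (w (t+1) ω) ∂μ ≤ (∫ ω, L (w t ω) ∂μ)
        - η * (∫ ω, ⟪gradient L (w t ω), Gmid t ω⟫ ∂μ)
        + (β * η ^ 2 / 2) * (∫ ω, ‖Gmid t ω‖ ^ 2 ∂μ) := by
      have := integral_mono (hL_int (t+1) ht1T) hRHSint hptdesc
      calc ∫ ω, L (w (t+1) ω) ∂μ ≤ ∫ ω, (L (w t ω)
            - η * ⟪gradient L (w t ω), Gmid t ω⟫
            + (β * η ^ 2 / 2) * ‖Gmid t ω‖ ^ 2) ∂μ := this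
        _ = (∫ ω, L (w t ω) ∂μ) - η * (∫ ω, ⟪gradient L (w t ω), Gmid t ω⟫ ∂μ)
            + (β * η ^ 2 / 2) * (∫ ω, ‖Gmid t ω‖ ^ 2 ∂μ) := by
            rw [integral_add hj1 hj2,
              integral_sub (hL_int t htT) (hinner_int.const_mul η),
              integral_const_mul, integral_const_mul]
    -- now pure real arithmetic
    rw [hIJ] at hA
    set gt := ∫ ω, ‖gradient L (w t ω)‖ ^ 2 ∂μ with hgt_def
    set Mt := ∫ ω, ‖gradient L (w t ω + r • Gasc t ω)‖ ^ 2 ∂μ with hMt_def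
    set at' := ∫ ω, ‖Gasc t ω‖ ^ 2 ∂μ with hat_def
    set IY2 := ∫ ω, ‖Gmid t ω‖ ^ 2 ∂μ with hIY2_def
    set Jt := ∫ ω, ⟪gradient L (w t ω), gradient L (w t ω + r • Gasc t ω)⟫ ∂μ with hJt_def
    have hgt0 : 0 ≤ gt := integral_nonneg fun ω => by positivity
    have hMt0 : 0 ≤ Mt := integral_nonneg fun ω => by positivity
    have hat0 : 0 ≤ at' := integral_nonneg fun ω => by positivity
    have hβη2 : β * η ^ 2 / 2 = ε * η / 2 := by
      rw [sq, ← mul_assoc, hβη]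
    rw [hβη2] at hA
    have hB2 : ε * IY2 ≤ ε * ν + ε * Mt := by
      have := mul_le_mul_of_nonneg_left hgmid2 hεpos.le
      rw [mul_add] at this
      exact this
    have hD2 : ε * at' ≤ ε * ν + ε * gt := by
      have h1 : at' ≤ ν + gt := hasc2.trans (by linarith [hZ'le])
      have := mul_le_mul_of_nonneg_left h1 hεpos.le
      rw [mul_add] at this
      exact this
    have hM2 : ε * Mt ≤ Mt := by
      calc ε * Mt ≤ 1 * Mt := mul_le_mul_of_nonneg_right (by linarith) hMt0
        _ = Mt := one_mul _
    have hG2' : ε * gt ≤ 1/4 * gt :=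
      mul_le_mul_of_nonneg_right (by linarith) hgt0
    have hK : gt/4 - ε * ν ≤ Jt - ε/2 * IY2 := by linarith [hJlb]
    have h5 := mul_le_mul_of_nonneg_left hK hηpos.le
    have h6 : η * (gt/4 - ε * ν) = η/4 * gt - η * ε * ν := by ring
    have h7 : η * (Jt - ε/2 * IY2) = η * Jt - ε * η / 2 * IY2 := by ring
    rw [h6, h7] at h5
    linarith [h5, hA]
  -- summation and telescoping
  have hsum : ∑ t ∈ Finset.range T, (η / 4 * ∫ ω, ‖gradient L (w t ω)‖ ^ 2 ∂μ) ≤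
      ∑ t ∈ Finset.range T,
        ((∫ ω, L (w t ω) ∂μ) - (∫ ω, L (w (t+1) ω) ∂μ) + η * ε * ν) :=
    Finset.sum_le_sum fun t ht => key t (Finset.mem_range.mp ht)
  rw [Finset.sum_add_distrib, Finset.sum_const, Finset.card_range, nsmul_eq_mul,
    Finset.sum_range_sub' (f := fun t => ∫ ω, L (w t ω) ∂μ), ← Finset.mul_sum] at hsum
  have hℓ0 : ∫ ω, L (w 0 ω) ∂μ = L w0 := by
    simp only [hw0]
    simp
  rw [hℓ0] at hsum
  -- final algebra
  set G := ∑ t ∈ Finset.range T, ∫ ω, ‖gradient L (w t ω)‖ ^ 2 ∂μ with hG_def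
  set D := L w0 - ∫ ω, L (w T ω) ∂μ with hD_def
  have hTne : (T:ℝ) ≠ 0 := ne_of_gt hTpos
  have hinv : 4 / η = 4 * β * sT := by
    rw [hη]
    field_simp
  have h2 : G ≤ 4 * β * sT * D + 4 * (T:ℝ) * ε * ν := by
    have h := mul_le_mul_of_nonneg_left hsum (by positivity : (0:ℝ) ≤ 4 / η)
    have h4η : 4 / η * η = 4 := by field_simp
    calc G = 4 / η * (η / 4 * G) := by field_simp
      _ ≤ 4 / η * (D + (T:ℝ) * (η * ε * ν)) := h
      _ = (4 / η) * η * ((T:ℝ) * ε * ν) + (4 / η) * D := by ring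
      _ = 4 * β * sT * D + 4 * (T:ℝ) * ε * ν := by rw [h4η, hinv]; ring
  have h3 : 1 / (T:ℝ) * G ≤ 4 * β / sT * D + 4 * ε * ν := by
    have h := mul_le_mul_of_nonneg_left h2 (by positivity : (0:ℝ) ≤ 1 / (T:ℝ))
    calc 1 / (T:ℝ) * G ≤ 1 / (T:ℝ) * (4 * β * sT * D + 4 * (T:ℝ) * ε * ν) := h
      _ = (4 * β * sT / (T:ℝ)) * D + 4 * ε * ν := by field_simp
      _ = 4 * β / sT * D + 4 * ε * ν := by
          rw [show 4 * β * sT / (T:ℝ) = 4 * β / sT by rw [← hsTsq]; field_simp]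
  have h4 : 4 * ε * ν ≤ 8 * σ ^ 2 / ((b:ℝ) * sT) := by
    have he : 4 * ε * ν = 4 * σ ^ 2 / ((b:ℝ) * sT) := by
      rw [hε_def, hν_def]
      ring
    have hnn : (0:ℝ) ≤ 4 * σ ^ 2 / ((b:ℝ) * sT) := by positivity
    rw [he, show 8 * σ ^ 2 / ((b:ℝ) * sT) = 4 * σ ^ 2 / ((b:ℝ) * sT) + 4 * σ ^ 2 / ((b:ℝ) * sT) by ring]
    linarith
  linarith [h3, h4]
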